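/- For n ≥ 8, letting β_n > 1 be the root of x^n - x - 1 and m_0 = ⌊log(1 - 1/β_n)/log(1/β_n)⌋, we have m_0 ≥ (n log n)/(log 2). -/

import Mathlib

lemma aux_log_quad {y : ℝ} (h0 : 0 ≤ y) (h1 : y ≤ 1) :
    y - y^2/2 ≤ Real.log (1+y) := by
  have hu0 : 0 ≤ y - y^2/2 := by nlinarith
  have hu1 : y - y^2/2 ≤ 1 := by nlinarith
  have hb := Real.exp_bound' hu0 hu1 (n := 3) (by norm_num)
  have hsum : (∑ m ∈ Finset.range 3, (y - y^2/2) ^ m / m.factorial)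
      = 1 + (y - y^2/2) + (y - y^2/2)^2/2 := by
    simp [Finset.sum_range_succ, Nat.factorial]
  rw [hsum] at hb
  norm_num [Nat.factorial] at hb
  have h2 : Real.exp (y - y^2/2) ≤ 1 + y := by
    nlinarith [hb, mul_nonneg (mul_nonneg h0 h0) h0, sq_nonneg y,
      mul_nonneg (mul_nonneg (mul_nonneg h0 h0) h0) h0,
      mul_nonneg (mul_nonneg (mul_nonneg (mul_nonneg h0 h0) h0) h0) h0,
      mul_nonneg (mul_nonneg (mul_nonneg (mul_nonneg (mul_nonneg h0 h0) h0) h0) h0) h0]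
  calc y - y^2/2 = Real.log (Real.exp (y - y^2/2)) := (Real.log_exp _).symm
    _ ≤ Real.log (1+y) := Real.log_le_log (Real.exp_pos _) h2

lemma aux_root_le {n : ℕ} (hn : 8 ≤ n) {b c : ℝ} (hb : 1 < b) (hbn : b ^ n = b + 1)
    (hc : 1 ≤ c) (hcn : c + 1 ≤ c ^ n) : b ≤ c := by
  by_contra h
  push_neg at h
  have hc0 : 0 < c := by linarith
  have hn8 : (8:ℝ) ≤ (n:ℝ) := by exact_mod_cast hn
  have key : (1 + (n:ℝ) * ((b - c)/c)) ≤ (b/c)^n := by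
    have hdn : (0:ℝ) ≤ (b-c)/c := div_nonneg (by linarith) hc0.le
    have := one_add_mul_le_pow (a := (b-c)/c) (by linarith) n
    have he : 1 + (b-c)/c = b/c := by field_simp; ring
    rwa [he] at this
  have hcpow : 0 < c ^ n := pow_pos hc0 n
  have key2 : c^n * (1 + (n:ℝ) * ((b - c)/c)) ≤ b^n :=
    calc c^n * (1 + (n:ℝ) * ((b - c)/c)) ≤ c^n * (b/c)^n :=
          mul_le_mul_of_nonneg_left key hcpow.le
      _ = b^n := by rw [← mul_pow]; congr 1; field_simp
  have hsel : c ≤ c ^ n := le_self_pow₀ hc (by omega)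
  have key3 : c^n + (n:ℝ) * (b - c) ≤ b^n := by
    have e : c^n * (1 + (n:ℝ) * ((b - c)/c)) = c^n + (n:ℝ)*(b-c) * (c^n/c) := by
      field_simp
    rw [e] at key2
    have h1 : (1:ℝ) ≤ c^n/c := (one_le_div hc0).2 hsel
    have hnbc : (0:ℝ) < (n:ℝ)*(b-c) := mul_pos (by linarith) (by linarith)
    nlinarith [mul_pos hnbc (by linarith : (0:ℝ) < c^n/c)]
  nlinarith [key3]

set_option maxHeartbeats 1000000 in
/-- For `n ≥ 8`, with `β_n > 1` the real root of `x^n - x - 1` and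
`m₀ = ⌊log(1 - 1/β_n)/log(1/β_n)⌋` the position of the second nonzero digit of
the beta expansion of `1`, we have `m₀ ≥ n log n / log 2`. -/
theorem second_digit_lower_bound (n : ℕ) (hn : 8 ≤ n) (b : ℝ)
    (hb : 1 < b) (hroot : b ^ n - b - 1 = 0)
    (m₀ : ℤ) (hm₀ : m₀ = ⌊Real.log (1 - 1 / b) / Real.log (1 / b)⌋) :
    (n : ℝ) * Real.log n / Real.log 2 ≤ (m₀ : ℝ) := by
  set L := Real.log 2 with hLdef
  have hL9 : 0.6931471803 < L := Real.log_two_gt_d9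
  have hL9' : L < 0.6931471808 := Real.log_two_lt_d9
  have hLpos : 0 < L := by linarith
  have hbn : b ^ n = b + 1 := by linarith
  have hn8 : (8:ℝ) ≤ (n:ℝ) := by exact_mod_cast hn
  have hnpos : (0:ℝ) < n := by linarith
  set a := L + 0.7/(n:ℝ) with hadef
  have h07 : 0.7/(n:ℝ) ≤ 0.7/8 :=
    div_le_div_of_nonneg_left (by norm_num) (by norm_num) hn8
  have haL : a ≤ 0.7806471808 := by rw [hadef]; linarith
  have ha_pos : 0 < a := by positivity
  have hyn : a/(n:ℝ) ≤ 1 := by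
    have : a/(n:ℝ) ≤ a/8 := div_le_div_of_nonneg_left ha_pos.le (by norm_num) hn8
    nlinarith
  set c := 1 + a/(n:ℝ) with hcdef
  have hc1 : (1:ℝ) ≤ c := by
    rw [hcdef]
    have : 0 ≤ a/(n:ℝ) := by positivity
    linarith
  have hcpos : (0:ℝ) < c := by linarith
  have hcn : c + 1 ≤ c ^ n := by
    have hq := aux_log_quad (y := a/(n:ℝ)) (by positivity) hyn
    have hnlog : a - a^2/(2*(n:ℝ)) ≤ (n:ℝ) * Real.log c := by
      have e : a/(n:ℝ) - (a/(n:ℝ))^2/2 = (a - a^2/(2*(n:ℝ)))/(n:ℝ) := by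
        field_simp
      rw [e] at hq
      calc a - a^2/(2*(n:ℝ)) = (n:ℝ) * ((a - a^2/(2*(n:ℝ)))/(n:ℝ)) := by
            field_simp
        _ ≤ (n:ℝ) * Real.log c := mul_le_mul_of_nonneg_left hq hnpos.le
    have h1 : Real.exp (a - a^2/(2*(n:ℝ))) ≤ c ^ n := by
      rw [show c ^ n = Real.exp ((n:ℝ) * Real.log c) by
        rw [← Real.log_pow, Real.exp_log (pow_pos hcpos n)]]
      exact Real.exp_le_exp.2 hnlog
    have h2 : c + 1 ≤ Real.exp (a - a^2/(2*(n:ℝ))) := by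
      have e2 : Real.exp (a - a^2/(2*(n:ℝ)))
          = 2 * Real.exp (0.7/(n:ℝ) - a^2/(2*(n:ℝ))) := by
        rw [← Real.exp_log (by norm_num : (0:ℝ) < 2), ← Real.exp_add]
        congr 1
        rw [hadef]; ring
      rw [e2]
      have h3 := Real.add_one_le_exp (0.7/(n:ℝ) - a^2/(2*(n:ℝ)))
      have h5 : a/(n:ℝ) ≤ (1.4 - a^2)/(n:ℝ) := by
        gcongr
        nlinarith [mul_le_mul_of_nonneg_left haL ha_pos.le, haL, ha_pos]
      have e3 : 2 * ((0.7/(n:ℝ) - a^2/(2*(n:ℝ))) + 1)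
          = 2 + (1.4 - a^2)/(n:ℝ) := by field_simp; ring
      nlinarith [h3]
    exact le_trans h2 h1
  have hbc : b ≤ c := aux_root_le hn hb hbn hc1 hcn
  have hd : b - 1 ≤ a/(n:ℝ) := by rw [hcdef] at hbc; linarith
  have hb1pos : (0:ℝ) < b - 1 := by linarith
  have hlogb_pos : 0 < Real.log b := Real.log_pos hb
  have hlogsum : (n:ℝ) * Real.log b = Real.log (b+1) := by
    rw [← Real.log_pow, hbn]
  have hlb1 : Real.log (b+1) ≤ L + a/(2*(n:ℝ)) := by
    have hble : b + 1 ≤ 2*(1 + a/(2*(n:ℝ))) := by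
      have : b ≤ 1 + a/(n:ℝ) := hbc
      have e : 2*(1 + a/(2*(n:ℝ))) = 2 + a/(n:ℝ) := by field_simp
      linarith
    have hp : (0:ℝ) < 1 + a/(2*(n:ℝ)) := by positivity
    calc Real.log (b+1) ≤ Real.log (2*(1 + a/(2*(n:ℝ)))) :=
          Real.log_le_log (by linarith) hble
      _ = L + Real.log (1 + a/(2*(n:ℝ))) := by
          rw [Real.log_mul (by norm_num) (ne_of_gt hp)]
      _ ≤ L + a/(2*(n:ℝ)) := by
          have := Real.log_le_sub_one_of_pos hp
          linarith
  have hlogn_nonneg : 0 ≤ Real.log n := Real.log_nonneg (by linarith)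
  have hlogb1 : Real.log (b-1) ≤ Real.log a - Real.log n := by
    calc Real.log (b-1) ≤ Real.log (a/(n:ℝ)) := Real.log_le_log hb1pos hd
      _ = Real.log a - Real.log n := Real.log_div (ne_of_gt ha_pos) (ne_of_gt hnpos)
  have hloga : Real.log a ≤ a - 1 := Real.log_le_sub_one_of_pos ha_pos
  -- fourth root of n
  set q := (n:ℝ) ^ ((4:ℝ)⁻¹) with hqdef
  have hqpos : 0 < q := Real.rpow_pos_of_pos hnpos _
  have hq4 : q^(4:ℕ) = (n:ℝ) := by
    rw [hqdef, ← Real.rpow_natCast ((n:ℝ) ^ ((4:ℝ)⁻¹)) 4, ← Real.rpow_mul hnpos.le]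
    norm_num
  have hq168 : 1.68 ≤ q := by
    by_contra hq'
    push_neg at hq'
    have : q^(4:ℕ) < 1.68^(4:ℕ) := by
      apply pow_lt_pow_left₀ hq' hqpos.le
      norm_num
    rw [hq4] at this
    norm_num at this
    linarith
  have hlogn : Real.log n ≤ 4*(q - 1) := by
    have hlq : Real.log n = 4 * Real.log q := by
      rw [hqdef, Real.log_rpow hnpos]; ring
    have := Real.log_le_sub_one_of_pos hqpos
    linarith
  clear_value L a c q
  -- core numeric inequality : log n * a / (2 n) ≤ L * (1 - a)
  have hcore : Real.log n * (a/(2*(n:ℝ))) ≤ L*(1-a) := by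
    have h1 : Real.log n * (a/(2*(n:ℝ))) ≤ (4*(q-1)) * (a/(2*(n:ℝ))) := by
      apply mul_le_mul_of_nonneg_right hlogn (by positivity)
    have e : (4*(q-1)) * (a/(2*(n:ℝ))) = (4*(q-1)*a) / (2*(n:ℝ)) := by ring
    have h2 : (4*(q-1)*a) / (2*(n:ℝ)) ≤ L*(1-a) := by
      rw [div_le_iff₀ (by positivity)]
      rw [← hq4]
      have hq1 : (0:ℝ) ≤ q - 1.68 := by linarith
      have hA1 : 4*(q-1)*a ≤ (q-1)*3.1225887232 := by
        nlinarith [mul_le_mul_of_nonneg_left haL (by linarith : (0:ℝ) ≤ 4*(q-1))]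
      have hA2 : (0.152043788:ℝ) ≤ L*(1-a) := by nlinarith [hL9, haL]
      have hpoly : (q-1)*3.1225887232 ≤ 0.152043788*(2*q^4) := by
        nlinarith [mul_nonneg hq1 hq1, mul_nonneg (mul_nonneg hq1 hq1) hq1,
          mul_nonneg (mul_nonneg (mul_nonneg hq1 hq1) hq1) hq1]
      nlinarith [mul_le_mul_of_nonneg_right hA2 (by positivity : (0:ℝ) ≤ 2*q^4)]
    calc Real.log n * (a/(2*(n:ℝ))) ≤ (4*(q-1)) * (a/(2*(n:ℝ))) := h1
      _ = (4*(q-1)*a) / (2*(n:ℝ)) := e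
      _ ≤ L*(1-a) := h2
  -- key inequality
  have key : (n:ℝ) * Real.log n / L * Real.log b ≤ - Real.log (b-1) := by
    have e1 : (n:ℝ) * Real.log n / L * Real.log b
        = Real.log n * ((n:ℝ) * Real.log b) / L := by ring
    rw [e1, hlogsum]
    rw [div_le_iff₀ hLpos]
    have h2 : Real.log n * Real.log (b+1) ≤ Real.log n * (L + a/(2*(n:ℝ))) :=
      mul_le_mul_of_nonneg_left hlb1 hlogn_nonneg
    rw [mul_add] at h2
    have h3 : L * Real.log a ≤ L * (a-1) := mul_le_mul_of_nonneg_left hloga hLpos.le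
    rw [mul_sub, mul_one] at h3
    have h4 : Real.log (b-1) * L ≤ (Real.log a - Real.log n) * L :=
      mul_le_mul_of_nonneg_right hlogb1 hLpos.le
    rw [sub_mul] at h4
    have hcore' := hcore
    rw [mul_sub, mul_one] at hcore'
    have e5 : Real.log a * L = L * Real.log a := by ring
    have e6 : Real.log (↑n) * L = L * Real.log (↑n) := by ring
    linarith [h2, h3, h4, hcore']
  -- floor handling
  have hX : Real.log (1 - 1/b) / Real.log (1/b)
      = (Real.log b - Real.log (b-1))/Real.log b := by
    rw [show (1:ℝ) - 1/b = (b-1)/b by field_simp,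
      Real.log_div (ne_of_gt hb1pos) (by positivity), one_div, Real.log_inv]
    rw [div_neg, ← neg_div, neg_sub]
  have hTX : (n:ℝ)*Real.log n/L + 1 ≤ Real.log (1 - 1/b) / Real.log (1/b) := by
    rw [hX, le_div_iff₀ hlogb_pos]
    nlinarith [key]
  have hfl := Int.sub_one_lt_floor (Real.log (1 - 1/b) / Real.log (1/b))
  rw [← hm₀] at hfl
  linarith
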